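/- If a hypergraph H is hereditary (p,q)-Helly, then H is (p,q')-Helly for every integer q' ≥ q. -/

import Mathlib

/-- The core of a family of sets: the elements lying in all members (and in at least one,
so that the core of the empty family is empty, matching that the vertex set of a
hypergraph is the union of its edges).  For a nonempty family this is just the
intersection of all members. -/
def hCore {β : Type*} (F : Finset (Finset β)) : Set β :=
  {x | (∃ E ∈ F, x ∈ E) ∧ ∀ E ∈ F, x ∈ E}

/-- A family is `(p,q)`-intersecting if every nonempty subfamily of at most `p` sets
has core of cardinality at least `q`. -/
def IsIntersecting {β : Type*} (p q : ℕ) (F : Finset (Finset β)) : Prop :=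
  ∀ F' ⊆ F, F'.Nonempty → F'.card ≤ p → q ≤ (hCore F').ncard

/-- A family is `(p,q)`-Helly if every nonempty `(p,q)`-intersecting subfamily
has core of cardinality at least `q`. -/
def IsHelly {β : Type*} (p q : ℕ) (F : Finset (Finset β)) : Prop :=
  ∀ F' ⊆ F, F'.Nonempty → IsIntersecting p q F' → q ≤ (hCore F').ncard
/-- The subhypergraph of `H` induced by the vertex subset `X`: restrict every edge to
`X` and discard the empty intersections. -/
def subhyper {α : Type*} [DecidableEq α] (H : Finset (Finset α)) (X : Finset α) :
    Finset (Finset α) :=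
  (H.image fun E => E ∩ X).filter fun E => E.Nonempty

/-- `H` is hereditary `(p,q)`-Helly if every subhypergraph of `H` is `(p,q)`-Helly. -/
def IsHereditaryHelly {α : Type*} [DecidableEq α] (p q : ℕ)
    (H : Finset (Finset α)) : Prop :=
  ∀ X : Finset α, IsHelly p q (subhyper H X)

/-- If a hypergraph `H` is hereditary `(p,q)`-Helly, then `H` is `(p,q')`-Helly for
every integer `q' ≥ q`. -/
lemma hCore_eq {β : Type*} [DecidableEq β] (F : Finset (Finset β)) (E₀ : Finset β)
    (hE₀ : E₀ ∈ F) :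
    hCore F = ↑(E₀.filter fun x => ∀ E ∈ F, x ∈ E) := by
  ext x
  simp only [hCore, Set.mem_setOf_eq, Finset.coe_filter, Set.mem_setOf_eq]
  constructor
  · rintro ⟨_, h2⟩; exact ⟨h2 E₀ hE₀, h2⟩
  · rintro ⟨h1, h2⟩; exact ⟨⟨E₀, hE₀, h1⟩, h2⟩

lemma hCore_singleton {β : Type*} (E : Finset β) : hCore {E} = ↑E := by
  ext x
  simp [hCore]

lemma subhyper_sup {α : Type*} [DecidableEq α] (H : Finset (Finset α))
    (hne : ∀ E ∈ H, E.Nonempty) : subhyper H (H.sup id) = H := by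
  ext E
  simp only [subhyper, Finset.mem_filter, Finset.mem_image]
  constructor
  · rintro ⟨⟨A, hA, rfl⟩, _⟩
    have hAs : A ∩ H.sup id = A :=
      Finset.inter_eq_left.mpr (fun x hx => Finset.mem_sup.mpr ⟨A, hA, hx⟩)
    rwa [hAs]
  · intro hE
    exact ⟨⟨E, hE, Finset.inter_eq_left.mpr (fun x hx => Finset.mem_sup.mpr ⟨E, hE, hx⟩)⟩, hne E hE⟩


theorem stmt12 {α : Type*} [DecidableEq α] (p q : ℕ) (hp : 0 < p) (hq : 0 < q)
    (H : Finset (Finset α)) (hne : ∀ E ∈ H, E.Nonempty)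
    (h : IsHereditaryHelly p q H) :
    ∀ q' : ℕ, q ≤ q' → IsHelly p q' H := by
  intro q' hq'
  induction q', hq' using Nat.le_induction with
  | base =>
    have := h (H.sup id)
    rwa [subhyper_sup H hne] at this
  | succ q' hq' IH =>
    intro F' hF'H hF'ne hint
    -- F' is (p,q')-intersecting, so by IH its core has at least q' elements
    have hint' : IsIntersecting p q' F' := fun G hG hGne hGc =>
      (Nat.le_succ q').trans (hint G hG hGne hGc)
    have hcore' : q' ≤ (hCore F').ncard := IH F' hF'H hF'ne hint'
    obtain ⟨E₀, hE₀⟩ := hF'ne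
    set C : Finset α := E₀.filter (fun x => ∀ E ∈ F', x ∈ E) with hC
    have hCeq : hCore F' = ↑C := hCore_eq F' E₀ hE₀
    have hCcard : q' ≤ C.card := by
      rwa [hCeq, Set.ncard_coe_finset] at hcore'
    have hsz : q' + 1 - q ≤ C.card := le_trans (by omega) hCcard
    obtain ⟨S, hSC, hScard⟩ := Finset.exists_subset_card_eq hsz
    -- every edge of F' has at least q'+1 elements
    have hedge : ∀ E ∈ F', q' + 1 ≤ E.card := by
      intro E hE
      have := hint {E} (Finset.singleton_subset_iff.mpr hE) ⟨E, Finset.mem_singleton_self E⟩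
        (by simp; omega)
      rwa [hCore_singleton, Set.ncard_coe_finset] at this
    -- edges minus S are nonempty
    have hES : ∀ E ∈ F', (E \ S).Nonempty := by
      intro E hE
      rw [← Finset.card_pos]
      have h1 := Finset.le_card_sdiff S E
      have := hedge E hE
      omega
    set X : Finset α := F'.sup id \ S with hX
    have hEX : ∀ E ∈ F', E ∩ X = E \ S := by
      intro E hE
      ext x
      simp only [hX, Finset.mem_inter, Finset.mem_sdiff, Finset.mem_sup, id]
      constructor
      · rintro ⟨h1, _, h2⟩; exact ⟨h1, h2⟩
      · rintro ⟨h1, h2⟩; exact ⟨h1, ⟨E, hE, h1⟩, h2⟩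
    set F'' : Finset (Finset α) := F'.image (fun E => E \ S) with hF''
    have hF''sub : F'' ⊆ subhyper H X := by
      intro B hB
      simp only [hF'', Finset.mem_image] at hB
      obtain ⟨E, hE, rfl⟩ := hB
      simp only [subhyper, Finset.mem_filter, Finset.mem_image]
      exact ⟨⟨E, hF'H hE, by rw [hEX E hE]⟩, hES E hE⟩
    have hF''ne : F''.Nonempty := ⟨E₀ \ S, Finset.mem_image_of_mem _ hE₀⟩
    -- F'' is (p,q)-intersecting
    have hF''int : IsIntersecting p q F'' := by
      intro G hG hGne hGc
      have hpre : ∀ B ∈ G, ∃ E, E ∈ F' ∧ E \ S = B := by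
        intro B hB
        have := hG hB
        simp only [hF'', Finset.mem_image] at this
        obtain ⟨E, hE, hEB⟩ := this
        exact ⟨E, hE, hEB⟩
      choose f hf1 hf2 using hpre
      set G₀ : Finset (Finset α) := G.attach.image (fun b => f b.1 b.2) with hG₀
      have hG₀sub : G₀ ⊆ F' := by
        intro E hE
        simp only [hG₀, Finset.mem_image, Finset.mem_attach, true_and] at hE
        obtain ⟨b, rfl⟩ := hE
        exact hf1 b.1 b.2
      obtain ⟨B₁, hB₁⟩ := hGne
      have hG₀ne : G₀.Nonempty := ⟨f B₁ hB₁, by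
        simp only [hG₀, Finset.mem_image]
        exact ⟨⟨B₁, hB₁⟩, Finset.mem_attach _ _, rfl⟩⟩
      have hG₀c : G₀.card ≤ p :=
        le_trans (le_trans Finset.card_image_le (by simp)) hGc
      have hq'1 : q' + 1 ≤ (hCore G₀).ncard := hint G₀ hG₀sub hG₀ne hG₀c
      obtain ⟨A₀, hA₀⟩ := hG₀ne
      set D : Finset α := A₀.filter (fun x => ∀ E ∈ G₀, x ∈ E) with hD
      have hDeq : hCore G₀ = ↑D := hCore_eq G₀ A₀ hA₀
      have hDcard : q' + 1 ≤ D.card := by rwa [hDeq, Set.ncard_coe_finset] at hq'1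
      -- D \ S ⊆ hCore G
      have hsub : ↑(D \ S) ⊆ hCore G := by
        intro x hx
        simp only [Finset.coe_sdiff, Set.mem_diff, Finset.mem_coe] at hx
        rw [hDeq] at hq'1
        have hxD : ∀ E ∈ G₀, x ∈ E := by
          have := hx.1
          simp only [hD, Finset.mem_filter] at this
          exact this.2
        have hxG : ∀ B ∈ G, x ∈ B := by
          intro B hB
          rw [← hf2 B hB]
          have : f B hB ∈ G₀ := by
            simp only [hG₀, Finset.mem_image]
            exact ⟨⟨B, hB⟩, Finset.mem_attach _ _, rfl⟩
          exact Finset.mem_sdiff.mpr ⟨hxD _ this, hx.2⟩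
        exact ⟨⟨B₁, hB₁, hxG B₁ hB₁⟩, hxG⟩
      have hfin : (hCore G).Finite := by
        apply Set.Finite.subset (B₁.finite_toSet)
        intro x hx
        exact hx.2 B₁ hB₁
      have h1 : ((D \ S : Finset α) : Set α).ncard ≤ (hCore G).ncard :=
        Set.ncard_le_ncard hsub hfin
      rw [Set.ncard_coe_finset] at h1
      have h2 := Finset.le_card_sdiff S D
      omega
    -- apply hereditary Helly
    have hmain : q ≤ (hCore F'').ncard := h X F'' hF''sub hF''ne hF''int
    -- hCore F'' = hCore F' \ S
    have hcoreF'' : hCore F'' = ↑(C \ S) := by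
      ext x
      simp only [hCore, Set.mem_setOf_eq, Finset.coe_sdiff, Set.mem_diff, Finset.mem_coe]
      constructor
      · rintro ⟨_, h2⟩
        have hx : ∀ E ∈ F', x ∈ E \ S := by
          intro E hE
          exact h2 _ (Finset.mem_image_of_mem _ hE)
        have hxE₀ := hx E₀ hE₀
        rw [Finset.mem_sdiff] at hxE₀
        refine ⟨?_, hxE₀.2⟩
        simp only [hC, Finset.mem_filter]
        exact ⟨hxE₀.1, fun E hE => (Finset.mem_sdiff.mp (hx E hE)).1⟩
      · rintro ⟨h1, h2⟩
        simp only [hC, Finset.mem_filter] at h1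
        constructor
        · exact ⟨E₀ \ S, Finset.mem_image_of_mem _ hE₀, Finset.mem_sdiff.mpr ⟨h1.2 E₀ hE₀, h2⟩⟩
        · intro B hB
          simp only [hF'', Finset.mem_image] at hB
          obtain ⟨E, hE, rfl⟩ := hB
          exact Finset.mem_sdiff.mpr ⟨h1.2 E hE, h2⟩
    rw [hcoreF'', Set.ncard_coe_finset] at hmain
    rw [hCeq, Set.ncard_coe_finset]
    have := Finset.card_sdiff_of_subset hSC
    omega
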